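/- Let K, K', L be augmented directed complexes with L decent, let f : K → K' and g : K → L, g' : K' → L be morphisms, and let h be an antihomotopy from g to g'∘f, i.e. a family of group homomorphisms h_i : K_i → L_{i+1} with d_{i+1}h_i − h_{i-1}d_i = (-1)^i((g'f)_i − g_i) for all i ≥ 0 (conventions h_{-1} = 0, d_0 = e) and h_i(K*_i) ⊆ L*_{i+1}. Then the maps (f,h)*_i : (L//g')_i → (L//g)_i defined by (f,h)*_i(u')_j = u'_j f_j + δ_{i,0}·e(u'_{-1}(1))·h_j constitute a morphism of augmented directed complexes (f,h)* : L//g' → L//g, and this morphism is over L (it commutes with the forgetful morphisms to L given by u ↦ u_{-1}(1)). -/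

import Mathlib

/-- An *augmented directed complex*: a chain complex of abelian groups in
non-negative degrees (`d n : X (n+1) →+ X n`), with an augmentation
`e : X 0 →+ ℤ` satisfying `e ∘ d₁ = 0`, and a positivity submonoid in each
degree. -/
structure ADC where
  X : ℕ → Type
  [inst : ∀ n, AddCommGroup (X n)]
  d : ∀ n, X (n + 1) →+ X n
  e : X 0 →+ ℤ
  dd : ∀ n x, d n (d (n + 1) x) = 0
  ed : ∀ x, e (d 0 x) = 0
  pos : ∀ n, AddSubmonoid (X n)

attribute [instance] ADC.inst

/-- Morphisms of augmented directed complexes: chain maps compatible with the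
augmentations and preserving the positivity submonoids. -/
structure ADCHom (K L : ADC) where
  f : ∀ n, K.X n →+ L.X n
  comm_d : ∀ n x, f n (K.d n x) = L.d n (f (n + 1) x)
  comm_e : ∀ x, L.e (f 0 x) = K.e x
  map_pos : ∀ n x, x ∈ K.pos n → f n x ∈ L.pos n

def ADCHom.id (K : ADC) : ADCHom K K where
  f _ := AddMonoidHom.id _
  comm_d _ _ := rfl
  comm_e _ := rfl
  map_pos _ _ hx := hx

def ADCHom.comp {K L M : ADC} (ψ : ADCHom L M) (φ : ADCHom K L) : ADCHom K M where
  f n := (ψ.f n).comp (φ.f n)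
  comm_d n x := by
    simp only [AddMonoidHom.comp_apply]
    rw [φ.comm_d, ψ.comm_d]
  comm_e x := by
    simp only [AddMonoidHom.comp_apply]
    rw [ψ.comm_e, φ.comm_e]
  map_pos n x hx := ψ.map_pos n _ (φ.map_pos n x hx)

/-- The carrier of the suspension of `K` : `ℤ` in degree `0` and `K.X n` in
degree `n+1`.  Equivalently, this is the family `K_{n-1}` (with `K_{-1} = ℤ`)
indexed by `n`. -/
def ADC.S (K : ADC) : ℕ → Type
  | 0 => ℤ
  | n + 1 => K.X n

instance ADC.instSAdd (K : ADC) : ∀ n, AddCommGroup (K.S n)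
  | 0 => inferInstanceAs (AddCommGroup ℤ)
  | n + 1 => inferInstanceAs (AddCommGroup (K.X n))

/-- The differential of the suspension : in lowest degree it is the
augmentation (`d₀ = e` convention), in higher degrees the differential of `K`. -/
def ADC.Sd (K : ADC) : ∀ n, K.S (n + 1) →+ K.S n
  | 0 => K.e
  | n + 1 => K.d n

/-- The positivity submonoids of the suspension : `ℕ ⊆ ℤ` in degree `0`. -/
noncomputable def ADC.Spos (K : ADC) : ∀ n, AddSubmonoid (K.S n)
  | 0 => AddSubmonoid.nonneg ℤ
  | n + 1 => K.pos n

/-- The suspension of a morphism (the identity of `ℤ` in degree `0`). -/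
def ADCHom.Sf {K L : ADC} (φ : ADCHom K L) : ∀ n, K.S n →+ L.S n
  | 0 => AddMonoidHom.id ℤ
  | n + 1 => φ.f n
/-- The underlying family of maps of a degree-`i` element of the slice
`M // g` : families `u_j : K_j → M_{i+j+1}` for `j ≥ -1`, encoded with
`K.S j = K_{j-1}` (so `K.S 0 = ℤ = K_{-1}`). -/
abbrev SlF (K M : ADC) (i : ℕ) : Type := ∀ j : ℕ, K.S j →+ M.S (j + i + 1)

def scast (M : ADC) {m n : ℕ} (h : m = n) : M.S m →+ M.S n where
  toFun x := h ▸ x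
  map_zero' := by subst h; rfl
  map_add' := by subst h; intro x y; rfl

/-- `j ↦ d_{i+j+1} ∘ u_j`. -/
def mainC (K M : ADC) (i : ℕ) (u : SlF K M i) (j : ℕ) : K.S j →+ M.S (j + i) :=
  (M.Sd (j + i)).comp (u j)

/-- `j ↦ u_{j-1} ∘ d_j` (with `u_{-2} = 0`). -/
def prevC (K M : ADC) (i : ℕ) (u : SlF K M i) : ∀ j : ℕ, K.S j →+ M.S (j + i)
  | 0 => 0
  | s + 1 => (scast M (show s + i + 1 = s + 1 + i by omega)).comp ((u s).comp (K.Sd s))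

/-- The differential of the slice `M // g` :
`d_i(u)_j = (-1)^{j+1} (d_{i+j+1} u_j - u_{j-1} d_j)`. -/
def Dsl (K M : ADC) (i : ℕ) (u : SlF K M (i + 1)) : SlF K M i := fun j =>
  ((-1 : ℤ) ^ j) • (mainC K M (i + 1) u j - prevC K M (i + 1) u j)

/-- The degree-`0` condition of the slice `M // g` :
`(-1)^{j+1}(d_{j+1} u_j - u_{j-1} d_j) = e(u_{-1}(1)) · g_j`. -/
def Cond (K M : ADC) (g : ADCHom K M) (u : SlF K M 0) : Prop :=
  ∀ j, ((-1 : ℤ) ^ j) • (mainC K M 0 u j - prevC K M 0 u j) =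
    M.e ((u 0) (1 : ℤ)) • g.Sf j

/-- Positivity for slice elements : `u_j(K*_j) ⊆ M*_{i+j+1}`. -/
def SlPos (K M : ADC) (i : ℕ) (u : SlF K M i) : Prop :=
  ∀ j x, x ∈ K.Spos j → u j x ∈ M.Spos (j + i + 1)
/-- An *antihomotopy* from `a` to `b` (two morphisms `K → L` of augmented
directed complexes): a family `h_i : K_i →+ L_{i+1}` satisfying
`d_{i+1} h_i - h_{i-1} d_i = (-1)^i (b_i - a_i)` (with the conventions
`h_{-1} = 0` and `d_0 = e`, so that for `i = 0` one gets
`d_1 h_0 = b_0 - a_0`), and preserving positivity. -/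
structure Antihtpy {K L : ADC} (a b : ADCHom K L) where
  h : ∀ i, K.X i →+ L.X (i + 1)
  cond0 : ∀ x, L.d 0 (h 0 x) = b.f 0 x - a.f 0 x
  cond : ∀ i x, L.d (i + 1) (h (i + 1) x) - h i (K.d i x) =
    ((-1 : ℤ) ^ (i + 1)) • (b.f (i + 1) x - a.f (i + 1) x)
  map_pos : ∀ i x, x ∈ K.pos i → h i x ∈ L.pos (i + 1)

/-- An augmented directed complex is *decent* if the augmentation is
non-negative on the degree-`0` positivity submonoid. -/
def ADC.Decent (L : ADC) : Prop := ∀ x ∈ L.pos 0, 0 ≤ L.e x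
/-- The extension of a family `h_i : K_i →+ L_{i+1}` to the suspended
indexing, with `h_{-1} = 0`. -/
def Ehx (K L : ADC) (hh : ∀ i, K.X i →+ L.X (i + 1)) : ∀ j, K.S j →+ L.S (j + 1)
  | 0 => 0
  | j + 1 => hh j

/-- The map `(f,h)^*` on slice elements :
`(f,h)^*_i(u')_j = u'_j ∘ f_j + δ_{i,0} · e(u'_{-1}(1)) · h_j`. -/
def slApp {K K' L : ADC} (f : ADCHom K K') (hh : ∀ i, K.X i →+ L.X (i + 1)) :
    ∀ i, SlF K' L i → SlF K L i
  | 0, u' => fun j => (u' j).comp (f.Sf j) + L.e ((u' 0) (1 : ℤ)) • Ehx K L hh j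
  | i + 1, u' => fun j => (u' j).comp (f.Sf j)

section Aux

variable {K K' L : ADC}

lemma Sf_Sd (f : ADCHom K K') : ∀ (j : ℕ) (x : K.S (j + 1)),
    f.Sf j (K.Sd j x) = K'.Sd j (f.Sf (j + 1) x)
  | 0, x => (f.comm_e x).symm
  | j + 1, x => f.comm_d j x

lemma Sf_pos (f : ADCHom K K') : ∀ (j : ℕ) (x : K.S j),
    x ∈ K.Spos j → f.Sf j x ∈ K'.Spos j
  | 0, _, hx => hx
  | j + 1, x, hx => f.map_pos j x hx

lemma Sf_comp (g' : ADCHom K' L) (f : ADCHom K K') : ∀ (j : ℕ) (x : K.S j),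
    (g'.comp f).Sf j x = g'.Sf j (f.Sf j x)
  | 0, _ => rfl
  | _ + 1, _ => rfl

lemma mainC_comp (f : ADCHom K K') (i : ℕ) (u : SlF K' L i) (j : ℕ) (x : K.S j) :
    mainC K L i (fun j => (u j).comp (f.Sf j)) j x = mainC K' L i u j (f.Sf j x) := rfl

lemma prevC_comp (f : ADCHom K K') (i : ℕ) (u : SlF K' L i) :
    ∀ (j : ℕ) (x : K.S j),
      prevC K L i (fun j => (u j).comp (f.Sf j)) j x = prevC K' L i u j (f.Sf j x)
  | 0, _ => rfl
  | s + 1, x => by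
    simp only [prevC, AddMonoidHom.comp_apply, Sf_Sd f s x]

lemma mainC_add (i : ℕ) (u v : SlF K L i) (j : ℕ) (x : K.S j) :
    mainC K L i (u + v) j x = mainC K L i u j x + mainC K L i v j x := by
  simp [mainC]

lemma prevC_add (i : ℕ) (u v : SlF K L i) :
    ∀ (j : ℕ) (x : K.S j),
      prevC K L i (u + v) j x = prevC K L i u j x + prevC K L i v j x
  | 0, _ => by simp [prevC]
  | s + 1, x => by simp [prevC]

lemma Ehx_cond {g : ADCHom K L} {g' : ADCHom K' L} {f : ADCHom K K'}
    (h : Antihtpy g (g'.comp f)) :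
    ∀ (j : ℕ) (x : K.S j),
      ((-1 : ℤ) ^ j) • (mainC K L 0 (Ehx K L h.h) j x - prevC K L 0 (Ehx K L h.h) j x)
        = g.Sf j x - (g'.comp f).Sf j x
  | 0, x => by simp [mainC, prevC, Ehx, ADCHom.Sf]
  | 1, x => by
    have hc := h.cond0 x
    show ((-1 : ℤ) ^ 1) • (L.d 0 (h.h 0 x) - (0 : K.S 0 →+ L.X 0) (K.e x))
      = g.f 0 x - (g'.comp f).f 0 x
    simp [hc]
    change (0 : L.X 0) - _ = _
    abel
  | s + 2, x => by
    have hc := h.cond s x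
    show ((-1 : ℤ) ^ (s + 2)) • (L.d (s + 1) (h.h (s + 1) x) - h.h s (K.d s x))
      = g.f (s + 1) x - (g'.comp f).f (s + 1) x
    rw [hc, smul_smul]
    have : ((-1 : ℤ) ^ (s + 2)) * ((-1 : ℤ) ^ (s + 1)) = -1 := by
      rw [← pow_add]
      have : s + 2 + (s + 1) = 2 * (s + 1) + 1 := by ring
      rw [this, pow_succ, pow_mul]
      simp
    rw [this]
    simp

end Aux

/-- Given morphisms `f : K → K'`, `g : K → L`, `g' : K' → L`
of augmented directed complexes with `L` decent, and an antihomotopy `h` from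
`g` to `g' ∘ f`, the maps `(f,h)^*_i : (L//g')_i → (L//g)_i` defined by
`(f,h)^*_i(u')_j = u'_j f_j + δ_{i,0} e(u'_{-1}(1)) h_j` constitute a morphism
of augmented directed complexes `(f,h)^* : L//g' → L//g` (additive, compatible
with the differentials, with the degree-0 conditions, with the augmentations
and with positivity), and this morphism is over `L` (it commutes with the
forgetful maps `u ↦ u_{-1}(1)` to `L`). -/
theorem statement16 (K K' L : ADC) (f : ADCHom K K') (g : ADCHom K L)
    (g' : ADCHom K' L) (hdec : L.Decent) (h : Antihtpy g (g'.comp f)) :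
    (∀ (i : ℕ) (u v : SlF K' L i),
      slApp f h.h i (u + v) = slApp f h.h i u + slApp f h.h i v) ∧
    (∀ i : ℕ, slApp f h.h i 0 = 0) ∧
    (∀ (i : ℕ) (u : SlF K' L (i + 1)),
      Dsl K L i (slApp f h.h (i + 1) u) = slApp f h.h i (Dsl K' L i u)) ∧
    (∀ u : SlF K' L 0, Cond K' L g' u → Cond K L g (slApp f h.h 0 u)) ∧
    (∀ u : SlF K' L 0,
      L.e (((slApp f h.h 0 u) 0) (1 : ℤ)) = L.e ((u 0) (1 : ℤ))) ∧
    (∀ (i : ℕ) (u : SlF K' L i), SlPos K' L i u → SlPos K L i (slApp f h.h i u)) ∧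
    (∀ (i : ℕ) (u : SlF K' L i),
      ((slApp f h.h i u) 0) (1 : ℤ) = (u 0) (1 : ℤ)) := by
  -- basic computation: the forgetful map
  have forget : ∀ (i : ℕ) (u : SlF K' L i), ((slApp f h.h i u) 0) (1 : ℤ) = (u 0) (1 : ℤ) := by
    intro i u
    cases i with
    | zero =>
      have heq : ((slApp f h.h 0 u) 0) (1 : ℤ)
          = (u 0) (1 : ℤ) + L.e ((u 0) (1 : ℤ)) • (Ehx K L h.h 0) (1 : ℤ) := rfl
      rw [heq]
      simp [Ehx]
      exact smul_zero _
    | succ i => rfl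
  refine ⟨?_, ?_, ?_, ?_, ?_, ?_, forget⟩
  · -- additivity
    intro i u v
    cases i with
    | zero =>
      funext j
      ext x
      simp only [slApp, Pi.add_apply, AddMonoidHom.add_apply, AddMonoidHom.comp_apply,
        AddMonoidHom.smul_apply, map_add, add_smul]
      have hadd : L.e ((u 0 + v 0) (1 : ℤ)) = L.e ((u 0) (1 : ℤ)) + L.e ((v 0) (1 : ℤ)) := by
        exact L.e.map_add _ _
      rw [hadd, add_smul]
      abel
    | succ i =>
      funext j
      ext x
      simp [slApp]
  · -- zero
    intro i
    cases i with
    | zero =>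
      funext j
      ext x
      simp [slApp]
      exact (congrArg (· • Ehx K L h.h j x) L.e.map_zero).trans (zero_smul _ _)
    | succ i =>
      funext j
      ext x
      simp [slApp]
  · -- compatibility with the differentials
    intro i u
    have key : ∀ (j : ℕ) (x : K.S j),
        Dsl K L i (slApp f h.h (i + 1) u) j x = (Dsl K' L i u) j (f.Sf j x) := by
      intro j x
      show ((-1 : ℤ) ^ j) • (mainC K L (i + 1) (fun j => ((u j).comp (f.Sf j))) j x
          - prevC K L (i + 1) (fun j => ((u j).comp (f.Sf j))) j x)
        = ((-1 : ℤ) ^ j) • (mainC K' L (i + 1) u j (f.Sf j x)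
          - prevC K' L (i + 1) u j (f.Sf j x))
      rw [mainC_comp f (i + 1) u j x, prevC_comp f (i + 1) u j x]
    cases i with
    | zero =>
      funext j
      ext x
      rw [key j x]
      have e0 : L.e ((Dsl K' L 0 u 0) (1 : ℤ)) = 0 := by
        have : (Dsl K' L 0 u 0) (1 : ℤ) = L.d 0 (u 0 (1 : ℤ)) := by
          show ((-1 : ℤ) ^ 0) • (mainC K' L 1 u 0 (1 : ℤ) - prevC K' L 1 u 0 (1 : ℤ))
            = L.d 0 (u 0 (1 : ℤ))
          have hp : prevC K' L 1 u 0 (1 : ℤ) = 0 := rfl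
          have hm : mainC K' L 1 u 0 (1 : ℤ) = L.d 0 (u 0 (1 : ℤ)) := rfl
          rw [hp, hm]
          simp
          exact sub_zero _
        rw [this]
        exact L.ed _
      simp [slApp, e0]
    | succ i =>
      funext j
      ext x
      rw [key j x]
      rfl
  · -- compatibility with the degree-0 conditions
    intro u hu
    intro j
    ext x
    set c : ℤ := L.e ((u 0) (1 : ℤ)) with hc
    have hc' : L.e (((slApp f h.h 0 u) 0) (1 : ℤ)) = c := by
      rw [forget 0 u]
    rw [hc']
    have expand : ∀ (j : ℕ) (x : K.S j),
        mainC K L 0 (slApp f h.h 0 u) j x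
          = mainC K' L 0 u j (f.Sf j x) + c • mainC K L 0 (Ehx K L h.h) j x ∧
        prevC K L 0 (slApp f h.h 0 u) j x
          = prevC K' L 0 u j (f.Sf j x) + c • prevC K L 0 (Ehx K L h.h) j x := by
      intro j x
      constructor
      · simp only [slApp, mainC, AddMonoidHom.comp_apply, AddMonoidHom.add_apply,
          AddMonoidHom.smul_apply, map_add, map_zsmul]
        rfl
      · cases j with
        | zero => simp [prevC]
        | succ s =>
          simp only [slApp, prevC, AddMonoidHom.comp_apply, AddMonoidHom.add_apply,
            AddMonoidHom.smul_apply, map_add, map_zsmul, Sf_Sd f s x]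
          rfl
    have hmain := (expand j x).1
    have hprev := (expand j x).2
    show ((-1 : ℤ) ^ j) • (mainC K L 0 (slApp f h.h 0 u) j x
        - prevC K L 0 (slApp f h.h 0 u) j x) = c • g.Sf j x
    rw [hmain, hprev]
    have rearr : mainC K' L 0 u j (f.Sf j x) + c • mainC K L 0 (Ehx K L h.h) j x
        - (prevC K' L 0 u j (f.Sf j x) + c • prevC K L 0 (Ehx K L h.h) j x)
        = (mainC K' L 0 u j (f.Sf j x) - prevC K' L 0 u j (f.Sf j x))
          + c • (mainC K L 0 (Ehx K L h.h) j x - prevC K L 0 (Ehx K L h.h) j x) := by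
      rw [smul_sub]; abel
    rw [rearr, smul_add]
    have h1 : ((-1 : ℤ) ^ j) • (mainC K' L 0 u j (f.Sf j x) - prevC K' L 0 u j (f.Sf j x))
        = c • g'.Sf j (f.Sf j x) := by
      exact congrArg (fun φ => φ (f.Sf j x)) (hu j)
    have h2 : ((-1 : ℤ) ^ j) • (c • (mainC K L 0 (Ehx K L h.h) j x
        - prevC K L 0 (Ehx K L h.h) j x))
        = c • (g.Sf j x - (g'.comp f).Sf j x) := by
      rw [smul_comm, Ehx_cond h j x]
    rw [h1, h2, Sf_comp g' f j x]
    rw [← smul_add]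
    congr 1
    abel
  · -- compatibility with the augmentations
    intro u
    rw [forget 0 u]
  · -- positivity
    intro i u hu
    cases i with
    | zero =>
      intro j x hx
      have h1 : u j (f.Sf j x) ∈ L.Spos (j + 0 + 1) := hu j _ (Sf_pos f j x hx)
      set c : ℤ := L.e ((u 0) (1 : ℤ)) with hc
      have hcpos : 0 ≤ c := by
        have : (u 0) (1 : ℤ) ∈ L.Spos (0 + 0 + 1) := hu 0 (1 : ℤ) (by exact Int.one_nonneg)
        exact hdec _ this
      have h2 : Ehx K L h.h j x ∈ L.Spos (j + 1) := by
        cases j with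
        | zero => simpa [Ehx] using (L.Spos 1).zero_mem
        | succ s => exact h.map_pos s x hx
      have h2' : c • Ehx K L h.h j x ∈ L.Spos (j + 1) := by
        obtain ⟨n, hn⟩ : ∃ n : ℕ, c = (n : ℤ) := ⟨c.toNat, (Int.toNat_of_nonneg hcpos).symm⟩
        rw [hn, natCast_zsmul]
        exact AddSubmonoid.nsmul_mem _ h2 _
      have : (slApp f h.h 0 u) j x = u j (f.Sf j x) + c • Ehx K L h.h j x := rfl
      rw [this]
      exact (L.Spos (j + 0 + 1)).add_mem h1 h2'
    | succ i =>
      intro j x hx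
      exact hu j _ (Sf_pos f j x hx)
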